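/- There do not exist vectors w₁, w₂, w₃, w₄ in the Euclidean plane ℝ² such that ⟪w₁, w₂⟫ > 0, ⟪w₁, w₃⟫ > 0, ⟪w₁, w₄⟫ > 0, and ⟪w₂, w₃⟫ ≤ 0, ⟪w₂, w₄⟫ ≤ 0, ⟪w₃, w₄⟫ ≤ 0. -/

import Mathlib

open scoped RealInnerProductSpace

lemma norm_pos_aux (a1 a2 x1 x2 : ℝ) (hx : 0 < a1*x1+a2*x2) : 0 < x1^2+x2^2 := by
  by_contra h
  push_neg at h
  have h1 : x1 = 0 := by nlinarith [sq_nonneg x1, sq_nonneg x2]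
  have h2 : x2 = 0 := by nlinarith [sq_nonneg x1, sq_nonneg x2]
  rw [h1, h2] at hx; simp at hx

lemma par_case (a1 a2 x1 x2 y1 y2 : ℝ) (hx : 0 < a1*x1+a2*x2) (hy : 0 < a1*y1+a2*y2)
    (hxy : x1*y1+x2*y2 ≤ 0) (h0 : x1*y2-x2*y1 = 0) : False := by
  have hn := norm_pos_aux a1 a2 x1 x2 hx
  have h0' : x2*y1-x1*y2 = 0 := by linarith
  have key : (a1*y1+a2*y2)*(x1^2+x2^2)
      = (a1*x1+a2*x2)*(x1*y1+x2*y2) + (a1*x2-a2*x1)*(x2*y1-x1*y2) := by ring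
  rw [h0', mul_zero, add_zero] at key
  nlinarith [mul_pos hy hn, mul_nonpos_of_nonneg_of_nonpos hx.le hxy]

lemma L_case (a1 a2 u1 u2 v1 v2 z1 z2 : ℝ)
    (h2 : 0 < a1*u1+a2*u2) (h3 : 0 < a1*v1+a2*v2) (h4 : 0 < a1*z1+a2*z2)
    (g23 : u1*v1+u2*v2 ≤ 0) (g24 : u1*z1+u2*z2 ≤ 0) (g34 : v1*z1+v2*z2 ≤ 0)
    (hC : 0 < u1*v2-u2*v1) (hP : 0 < z1*v2-z2*v1) : False := by
  have hu := norm_pos_aux a1 a2 u1 u2 h2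
  have hv := norm_pos_aux a1 a2 v1 v2 h3
  have I2 : (u1*v2-u2*v1)*(u1*z1+u2*z2)
      = (z1*v2-z2*v1)*(u1^2+u2^2) + (u1*z2-u2*z1)*(u1*v1+u2*v2) := by ring
  have I3 : (u1*v2-u2*v1)*(v1*z1+v2*z2)
      = (z1*v2-z2*v1)*(u1*v1+u2*v2) + (u1*z2-u2*z1)*(v1^2+v2^2) := by ring
  have hL2 : (u1*v2-u2*v1)*(u1*z1+u2*z2) ≤ 0 := mul_nonpos_of_nonneg_of_nonpos hC.le g24
  have hL3 : (u1*v2-u2*v1)*(v1*z1+v2*z2) ≤ 0 := mul_nonpos_of_nonneg_of_nonpos hC.le g34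
  have hPu : 0 < (z1*v2-z2*v1)*(u1^2+u2^2) := mul_pos hP hu
  have hQuv : (u1*z2-u2*z1)*(u1*v1+u2*v2) < 0 := by linarith
  have huv : u1*v1+u2*v2 < 0 := by
    rcases g23.lt_or_eq with h | h
    · exact h
    · rw [h, mul_zero] at hQuv; exact absurd hQuv (lt_irrefl 0)
  have hQ : 0 < u1*z2-u2*z1 := by
    by_contra hq
    push_neg at hq
    nlinarith [mul_nonneg (neg_nonneg.mpr hq) (neg_nonneg.mpr huv.le)]
  have ineqA : (z1*v2-z2*v1)*(u1^2+u2^2) ≤ (u1*z2-u2*z1)*(-(u1*v1+u2*v2)) := by nlinarith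
  have ineqB : (u1*z2-u2*z1)*(v1^2+v2^2) ≤ (z1*v2-z2*v1)*(-(u1*v1+u2*v2)) := by nlinarith
  have hprod := mul_le_mul ineqA ineqB
    (mul_nonneg hQ.le (by positivity)) (mul_nonneg hQ.le (by linarith))
  have lagrange : (u1^2+u2^2)*(v1^2+v2^2)
      = (u1*v1+u2*v2)^2 + (u1*v2-u2*v1)^2 := by ring
  nlinarith [mul_pos (mul_pos hP hQ) (mul_pos hC hC), hprod]

set_option maxHeartbeats 1000000 in
theorem three_star_not_rank_two :
    ¬ ∃ w₁ w₂ w₃ w₄ : EuclideanSpace ℝ (Fin 2),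
      ⟪w₁, w₂⟫ > 0 ∧ ⟪w₁, w₃⟫ > 0 ∧ ⟪w₁, w₄⟫ > 0 ∧
      ⟪w₂, w₃⟫ ≤ 0 ∧ ⟪w₂, w₄⟫ ≤ 0 ∧ ⟪w₃, w₄⟫ ≤ 0 := by
  rintro ⟨w₁, w₂, w₃, w₄, h2, h3, h4, g23, g24, g34⟩
  simp only [PiLp.inner_apply, RCLike.inner_apply, conj_trivial, Fin.sum_univ_two]
    at h2 h3 h4 g23 g24 g34
  set a1 := w₁ 0 with ha1; set a2 := w₁ 1 with ha2
  set u1 := w₂ 0 with hu1; set u2 := w₂ 1 with hu2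
  set v1 := w₃ 0 with hv1; set v2 := w₃ 1 with hv2
  set z1 := w₄ 0 with hz1; set z2 := w₄ 1 with hz2
  have h2 : 0 < a1*u1+a2*u2 := by linarith
  have h3 : 0 < a1*v1+a2*v2 := by linarith
  have h4 : 0 < a1*z1+a2*z2 := by linarith
  have g23 : u1*v1+u2*v2 ≤ 0 := by linarith
  have g24 : u1*z1+u2*z2 ≤ 0 := by linarith
  have g34 : v1*z1+v2*z2 ≤ 0 := by linarith
  have I1 : (u1*v2-u2*v1)*(a1*z1+a2*z2)
      = (z1*v2-z2*v1)*(a1*u1+a2*u2) + (u1*z2-u2*z1)*(a1*v1+a2*v2) := by ring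
  rcases lt_trichotomy 0 (v1*z2-v2*z1) with hc3 | hc3 | hc3
  · rcases lt_trichotomy 0 (u1*z2-u2*z1) with hc2 | hc2 | hc2
    · exact L_case a1 a2 u1 u2 z1 z2 v1 v2 h2 h4 h3 g24 g23 (by linarith) hc2 hc3
    · exact par_case a1 a2 u1 u2 z1 z2 h2 h4 g24 hc2.symm
    · rcases lt_trichotomy 0 (u1*v2-u2*v1) with hc1 | hc1 | hc1
      · nlinarith [I1, mul_pos hc1 h4, mul_pos hc3 h2, mul_pos (neg_pos.mpr hc2) h3]
      · exact par_case a1 a2 u1 u2 v1 v2 h2 h3 g23 hc1.symm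
      · exact L_case a1 (-a2) u1 (-u2) v1 (-v2) z1 (-z2)
          (by nlinarith only [h2]) (by nlinarith only [h3]) (by nlinarith only [h4])
          (by nlinarith only [g23]) (by nlinarith only [g24]) (by nlinarith only [g34])
          (by nlinarith only [hc1]) (by nlinarith only [hc3])
  · exact par_case a1 a2 v1 v2 z1 z2 h3 h4 g34 hc3.symm
  · rcases lt_trichotomy 0 (u1*z2-u2*z1) with hc2 | hc2 | hc2
    · rcases lt_trichotomy 0 (u1*v2-u2*v1) with hc1 | hc1 | hc1
      · exact L_case a1 a2 u1 u2 v1 v2 z1 z2 h2 h3 h4 g23 g24 g34 hc1 (by linarith)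
      · exact par_case a1 a2 u1 u2 v1 v2 h2 h3 g23 hc1.symm
      · nlinarith [I1, mul_pos (neg_pos.mpr hc1) h4,
          mul_pos (show (0:ℝ) < z1*v2-z2*v1 by linarith) h2, mul_pos hc2 h3]
    · exact par_case a1 a2 u1 u2 z1 z2 h2 h4 g24 hc2.symm
    · exact L_case a1 (-a2) u1 (-u2) z1 (-z2) v1 (-v2)
        (by nlinarith only [h2]) (by nlinarith only [h4]) (by nlinarith only [h3])
        (by nlinarith only [g24]) (by nlinarith only [g23]) (by nlinarith only [g34])
        (by nlinarith only [hc2]) (by nlinarith only [hc3])
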